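/- For any finite graph G of order n ≥ 2, there exist distinct vertices u, v with Δ_{uv} ≤ ⌊(n-1)/2⌋, where Δ_{uv} is the number of vertices w ∉ {u,v} adjacent to exactly one of u and v. -/

import Mathlib

open Finset

theorem exists_small_delta {V : Type*} [Fintype V] (G : SimpleGraph V)
    (hn : 2 ≤ Fintype.card V) :
    ∃ u v : V, u ≠ v ∧
      Nat.card {w : V // w ≠ u ∧ w ≠ v ∧ Xor' (G.Adj w u) (G.Adj w v)} ≤
        (Fintype.card V - 1) / 2 := by
  classical
  by_contra hcon
  push_neg at hcon
  set n := Fintype.card V with hndef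
  -- indicator
  set t : V → V → V → ℕ := fun u v w =>
    if w ≠ u ∧ w ≠ v ∧ Xor' (G.Adj w u) (G.Adj w v) then 1 else 0 with ht
  have key : ∀ u v : V, u ≠ v → n ≤ 2 * ∑ w : V, t u v w := by
    intro u v huv
    have h := hcon u v huv
    rw [Nat.card_eq_fintype_card, Fintype.card_subtype] at h
    rw [ht]
    rw [← Finset.card_filter]
    omega
  -- the double sum S over ordered pairs u ≠ v
  have diag0 : ∀ u w : V, t u u w = 0 := by
    intro u w
    simp [ht, xor_self, Xor']
  -- lower bound
  have lower : n * (n * (n - 1)) ≤ 2 * ∑ u : V, ∑ v : V, ∑ w : V, t u v w := by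
    have : ∀ u : V, n * (n - 1) ≤ ∑ v : V, 2 * ∑ w : V, t u v w := by
      intro u
      calc n * (n - 1) = ∑ v ∈ univ.erase u, n := by
            rw [Finset.sum_const, card_erase_of_mem (mem_univ u), smul_eq_mul,
              Finset.card_univ, mul_comm]
        _ ≤ ∑ v ∈ univ.erase u, 2 * ∑ w : V, t u v w := by
            apply Finset.sum_le_sum
            intro v hv
            exact key u v (Ne.symm (Finset.ne_of_mem_erase hv))
        _ ≤ ∑ v : V, 2 * ∑ w : V, t u v w := by
            apply Finset.sum_le_sum_of_subset (Finset.subset_univ _)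
    calc n * (n * (n - 1)) = ∑ u : V, n * (n - 1) := by
          rw [Finset.sum_const, Finset.card_univ, smul_eq_mul]
      _ ≤ ∑ u : V, ∑ v : V, 2 * ∑ w : V, t u v w := Finset.sum_le_sum fun u _ => this u
      _ = 2 * ∑ u : V, ∑ v : V, ∑ w : V, t u v w := by
          rw [Finset.mul_sum]; congr 1; ext u; rw [Finset.mul_sum]
  -- upper bound: count by w
  have perw : ∀ w : V, 2 * ∑ u : V, ∑ v : V, t u v w ≤ (n - 1) * (n - 1) := by
    intro w
    set A := G.neighborFinset w with hA
    set B := (insert w A)ᶜ with hB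
    have hwA : w ∉ A := by simp [hA]
    have hsum : ∑ u : V, ∑ v : V, t u v w
        = ((univ ×ˢ univ).filter (fun p : V × V =>
            w ≠ p.1 ∧ w ≠ p.2 ∧ Xor' (G.Adj w p.1) (G.Adj w p.2))).card := by
      rw [Finset.card_filter, Finset.sum_product]
    have hset : (univ ×ˢ univ).filter (fun p : V × V =>
            w ≠ p.1 ∧ w ≠ p.2 ∧ Xor' (G.Adj w p.1) (G.Adj w p.2))
        = A ×ˢ B ∪ B ×ˢ A := by
      ext ⟨u, v⟩
      simp only [Finset.mem_filter, Finset.mem_product, Finset.mem_union,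
        Finset.mem_compl, Finset.mem_insert, hB, hA, SimpleGraph.mem_neighborFinset,
        Finset.mem_univ, true_and, not_or]
      simp only [Xor', Xor]
      have h1 : G.Adj w u → w ≠ u := fun h => (G.ne_of_adj h)
      have h2 : G.Adj w v → w ≠ v := fun h => (G.ne_of_adj h)
      constructor
      · rintro ⟨hu, hv, h | h⟩
        · exact Or.inl ⟨h.1, Ne.symm hv, h.2⟩
        · exact Or.inr ⟨⟨Ne.symm hu, h.2⟩, h.1⟩
      · rintro (⟨hu, hv1, hv2⟩ | ⟨⟨hu1, hu2⟩, hv⟩)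
        · exact ⟨h1 hu, fun e => hv1 e.symm, Or.inl ⟨hu, hv2⟩⟩
        · exact ⟨fun e => hu1 e.symm, h2 hv, Or.inr ⟨hv, hu2⟩⟩
    have hdisj : Disjoint (A ×ˢ B) (B ×ˢ A) := by
      apply Finset.disjoint_left.mpr
      rintro ⟨u, v⟩ h1 h2
      rw [Finset.mem_product] at h1 h2
      have hu1 := h1.1
      have hu2 := h2.1
      rw [hB, Finset.mem_compl, Finset.mem_insert] at hu2
      push_neg at hu2
      exact hu2.2 hu1
    have hcardB : B.card = n - 1 - A.card := by
      rw [hB, Finset.card_compl, Finset.card_insert_of_notMem hwA]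
      omega
    have hAle : A.card ≤ n - 1 := by
      have : (insert w A).card ≤ n := Finset.card_le_univ _
      rw [Finset.card_insert_of_notMem hwA] at this
      omega
    rw [hsum, hset, Finset.card_union_of_disjoint hdisj, Finset.card_product,
      Finset.card_product, hcardB]
    set d := A.card
    have hdb : d + (n - 1 - d) = n - 1 := by omega
    zify
    nlinarith [sq_nonneg ((d : ℤ) - (n - 1 - d : ℕ)), hdb]
  have upper : 2 * ∑ u : V, ∑ v : V, ∑ w : V, t u v w ≤ n * ((n - 1) * (n - 1)) := by
    have hswap : ∑ u : V, ∑ v : V, ∑ w : V, t u v w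
        = ∑ w : V, ∑ u : V, ∑ v : V, t u v w := by
      calc ∑ u : V, ∑ v : V, ∑ w : V, t u v w
          = ∑ u : V, ∑ w : V, ∑ v : V, t u v w :=
            Finset.sum_congr rfl fun u _ => Finset.sum_comm
        _ = ∑ w : V, ∑ u : V, ∑ v : V, t u v w := Finset.sum_comm
    rw [hswap]
    calc 2 * ∑ w : V, ∑ u : V, ∑ v : V, t u v w
        = ∑ w : V, 2 * ∑ u : V, ∑ v : V, t u v w := by rw [Finset.mul_sum]
      _ ≤ ∑ w : V, (n - 1) * (n - 1) := Finset.sum_le_sum fun w _ => perw w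
      _ = n * ((n - 1) * (n - 1)) := by
          rw [Finset.sum_const, Finset.card_univ, smul_eq_mul]
  have h2 : n * (n * (n - 1)) ≤ n * ((n - 1) * (n - 1)) := le_trans lower upper
  obtain ⟨k, hk⟩ : ∃ k, n = k + 1 := ⟨n - 1, by omega⟩
  rw [hk] at h2 hn
  simp only [Nat.add_sub_cancel] at h2
  nlinarith [h2, hn]
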